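/- Let k be a commutative ring, A a unital k-algebra that is free as a k-module, and n ≥ 2. Then the top graph cohomology of the directed (n+1)-gon satisfies Ĥ^n_A(P_{n+1}) ≅ A / C, where C is the k-submodule of A generated by all commutators ab − ba (a, b ∈ A); equivalently Ĥ^n_A(P_{n+1}) ≅ HH_0(A). -/

import Mathlib

open TensorProduct DirectSum

universe u

section HochschildCore

variable (k : Type u) [CommRing k] (A : Type u) [Ring A] [Algebra k A]
variable (M : Type u) [AddCommGroup M] [Module k M]
  [Module A M] [Module Aᵐᵒᵖ M] [SMulCommClass A Aᵐᵒᵖ M]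
  [IsScalarTower k A M] [IsScalarTower k Aᵐᵒᵖ M]

/-- The Hochschild chain module `C_r(A,M) = M ⊗ A^{⊗ r}` (iterated tensor product over `k`),
bundled as an object of `ModuleCat k`. -/
noncomputable def HochOb : ℕ → ModuleCat.{u} k
  | 0 => ModuleCat.of k M
  | (r+1) => ModuleCat.of k ((HochOb r : Type u) ⊗[k] A)

/-- The Hochschild chain module `C_r(A,M) = M ⊗ A^{⊗ r}`. -/
noncomputable abbrev HC (r : ℕ) : Type u := HochOb k A M r

/-- The left action of `A` on `M`, as a bilinear map over `k`. -/
noncomputable def actL0 : A →ₗ[k] M →ₗ[k] M where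
  toFun a :=
    { toFun := fun x => a • x
      map_add' := fun x y => smul_add a x y
      map_smul' := fun c x => (smul_comm c a x).symm }
  map_add' a b := LinearMap.ext fun x => add_smul a b x
  map_smul' c a := LinearMap.ext fun x => smul_assoc c a x

/-- The right action of `A` on `M`, as a bilinear map over `k`. -/
noncomputable def actR : M →ₗ[k] A →ₗ[k] M where
  toFun x :=
    { toFun := fun a => MulOpposite.op a • x
      map_add' := fun a b => by rw [MulOpposite.op_add, add_smul]
      map_smul' := fun c a => by
        dsimp only [RingHom.id_apply]; rw [MulOpposite.op_smul, smul_assoc] }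
  map_add' x y := LinearMap.ext fun a => smul_add _ x y
  map_smul' c x := LinearMap.ext fun a => (smul_comm c _ x).symm

/-- The left action of `A` on the `M`-factor of `C_r(A,M)`, as a bilinear map. -/
noncomputable def actL : (r : ℕ) → (A →ₗ[k] HC k A M r →ₗ[k] HC k A M r)
  | 0 => actL0 k A M
  | (r+1) => (LinearMap.rTensorHom A).comp (actL r)

/-- The Hochschild face maps `d_i : C_{r+1}(A,M) → C_r(A,M)`, `i = 0, …, r+1`:
`d_0 (m, a_1, …, a_{r+1}) = (m a_1, a_2, …, a_{r+1})`,
`d_i (m, a_1, …, a_{r+1}) = (m, a_1, …, a_i a_{i+1}, …, a_{r+1})` for `1 ≤ i ≤ r`, and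
`d_{r+1} (m, a_1, …, a_{r+1}) = (a_{r+1} m, a_1, …, a_r)`. -/
noncomputable def hface : (r : ℕ) → Fin (r+2) → (HC k A M (r+1) →ₗ[k] HC k A M r)
  | 0, i =>
      if i.val = 0 then TensorProduct.lift (actR k A M)
      else TensorProduct.lift ((actL k A M 0).flip)
  | (r+1), i =>
      if h : i.val ≤ r then
        LinearMap.rTensor A (hface r ⟨i.val, by omega⟩)
      else if i.val = r + 1 then
        (LinearMap.lTensor (HC k A M r) (LinearMap.mul' k A)).comp
          (TensorProduct.assoc k (HC k A M r) A A).toLinearMap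
      else
        TensorProduct.lift ((actL k A M (r+1)).flip)

/-- The Hochschild boundary `b = Σ_{i=0}^{r+1} (-1)^i d_i : C_{r+1}(A,M) → C_r(A,M)`. -/
noncomputable def hboundary (r : ℕ) : HC k A M (r+1) →ₗ[k] HC k A M r :=
  ∑ i : Fin (r+2), ((-1 : ℤ) ^ (i : ℕ)) • hface k A M r i

/-- The submodule of Hochschild cycles in degree `r`. -/
noncomputable def hcycles : (r : ℕ) → Submodule k (HC k A M r)
  | 0 => ⊤
  | (r+1) => LinearMap.ker (hboundary k A M r)

/-- The Hochschild homology `H_r(A,M)` of `A` with coefficients in the bimodule `M`: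
the `r`-th homology of the Hochschild chain complex `C_*(A,M)`. -/
noncomputable def HochH (r : ℕ) : Type u :=
  (hcycles k A M r) ⧸ (Submodule.comap (hcycles k A M r).subtype
    (LinearMap.range (hboundary k A M r)))

noncomputable instance (r : ℕ) : AddCommGroup (HochH k A M r) :=
  inferInstanceAs (AddCommGroup ((hcycles k A M r) ⧸ (Submodule.comap (hcycles k A M r).subtype
    (LinearMap.range (hboundary k A M r)))))

noncomputable instance (r : ℕ) : Module k (HochH k A M r) :=
  inferInstanceAs (Module k ((hcycles k A M r) ⧸ (Submodule.comap (hcycles k A M r).subtype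
    (LinearMap.range (hboundary k A M r)))))

end HochschildCore
section PolygonCore

variable (k : Type u) [CommRing k] (A : Type u) [Ring A] [Algebra k A]
variable (M : Type u) [AddCommGroup M] [Module k M]
  [Module A M] [Module Aᵐᵒᵖ M] [SMulCommClass A Aᵐᵒᵖ M]
  [IsScalarTower k A M] [IsScalarTower k Aᵐᵒᵖ M]

/-- Subsets of the edge set of a graph with `m` edges having exactly `j` elements. -/
def EdgeSub (m j : ℕ) : Type := {s : Finset (Fin m) // s.card = j}

instance (m j : ℕ) : DecidableEq (EdgeSub m j) := by unfold EdgeSub; infer_instance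

/-- The `j`-th cochain group of the `M`-reduced graph cochain complex of the directed
`m`-gon `P_m`: the direct sum over all `j`-element subsets `s` of the edge set of
`Φ̂(s) = M ⊗ A^{⊗ (k(s) - 1)}`, where `k(s) = m - j` (for `j < m`) is the number of
connected components of the spanning subgraph `[P_m : s]`; the factor `M` is the weight of
the component containing the base vertex `v₀` and the `A`-factors are the weights of the
remaining components, listed anticlockwise starting from the component of `v₀`. -/
noncomputable def PChain (m j : ℕ) : Type u :=
  ⨁ (_s : EdgeSub m j), HC k A M (m - 1 - j)

noncomputable instance (m j : ℕ) : AddCommGroup (PChain k A M m j) :=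
  inferInstanceAs (AddCommGroup (⨁ (_s : EdgeSub m j), HC k A M (m - 1 - j)))

noncomputable instance (m j : ℕ) : Module k (PChain k A M m j) :=
  inferInstanceAs (Module k (⨁ (_s : EdgeSub m j), HC k A M (m - 1 - j)))

/-- The morphism `Φ̂(s ⊂ s ∪ e)` of the `M`-reduced graph cochain complex of the
directed `m`-gon, in coordinates: `i` is the number of edges of the complement of `s`
which are smaller than `e`.  Adding the edge `e` merges the two components of `[P_m : s]`
adjacent to `e` (multiplying their weights in the order given by the direction of `e`),
which in coordinates is exactly the Hochschild face map `d_i`; if `e` joins a component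
of `[P_m : s]` to itself (which for the polygon happens exactly when `j = m - 1`), the
morphism is the zero map. -/
noncomputable def pMerge (m j i : ℕ) : HC k A M (m-1-j) →ₗ[k] HC k A M (m-1-(j+1)) :=
  if h : j + 2 ≤ m ∧ i < m - j then by
    rw [show m-1-j = (m-2-j)+1 by omega, show m-1-(j+1) = m-2-j by omega]
    exact hface k A M (m-2-j) ⟨i, by omega⟩
  else 0

/-- The differential of the `M`-reduced graph cochain complex of the directed `m`-gon:
`d(s) = Σ_{e ∉ s} (-1)^{t(s,e)} Φ̂(s ⊂ s ∪ e)` where `t(s,e)` is the number of edges of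
`s` smaller than `e`. -/
noncomputable def pD (m j : ℕ) : PChain k A M m j →ₗ[k] PChain k A M m (j+1) :=
  DirectSum.toModule k (EdgeSub m j) (PChain k A M m (j+1)) (fun s =>
    ∑ e ∈ (s.val)ᶜ.attach,
      ((-1 : ℤ) ^ ((s.val.filter (fun a => a < e.val)).card)) •
        ((DirectSum.lof k (EdgeSub m (j+1)) (fun _ => HC k A M (m-1-(j+1)))
            ⟨insert e.val s.val, by
              rw [Finset.card_insert_of_notMem (Finset.mem_compl.mp e.property), s.property]⟩).comp
          (pMerge k A M m j (((s.val)ᶜ.filter (fun a => a < e.val)).card))))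

/-- The coboundaries of the `M`-reduced graph cochain complex of the directed `m`-gon. -/
noncomputable def pBnd : (m j : ℕ) → Submodule k (PChain k A M m j)
  | _, 0 => ⊥
  | m, (j+1) => LinearMap.range (pD k A M m j)

/-- The `M`-reduced graph cohomology `Ĥ^j_{A,M}(P_m)` of the directed `m`-gon. -/
noncomputable def PolyCoh (m j : ℕ) : Type u :=
  (LinearMap.ker (pD k A M m j)) ⧸
    (Submodule.comap (LinearMap.ker (pD k A M m j)).subtype (pBnd k A M m j))

noncomputable instance (m j : ℕ) : AddCommGroup (PolyCoh k A M m j) :=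
  inferInstanceAs (AddCommGroup ((LinearMap.ker (pD k A M m j)) ⧸
    (Submodule.comap (LinearMap.ker (pD k A M m j)).subtype (pBnd k A M m j))))

noncomputable instance (m j : ℕ) : Module k (PolyCoh k A M m j) :=
  inferInstanceAs (Module k ((LinearMap.ker (pD k A M m j)) ⧸
    (Submodule.comap (LinearMap.ker (pD k A M m j)).subtype (pBnd k A M m j))))

end PolygonCore
section Aux
variable (k : Type u) [CommRing k] (A : Type u) [Ring A] [Algebra k A]

lemma hboundary0_apply (x a : A) :
    hboundary k A A 0 (x ⊗ₜ[k] a) = x * a - a * x := by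
  simp only [hboundary, LinearMap.sum_apply, LinearMap.smul_apply]
  show ∑ i : Fin 2, ((-1:ℤ)^(i:ℕ)) • hface k A A 0 i (x ⊗ₜ[k] a) = _
  simp only [Fin.sum_univ_two, Fin.val_zero, Fin.val_one, pow_zero, pow_one, one_smul, neg_smul]
  rw [show hface k A A 0 0 (x ⊗ₜ[k] a) = x * a from rfl,
      show hface k A A 0 1 (x ⊗ₜ[k] a) = a * x from rfl]
  exact (sub_eq_add_neg _ _).symm

lemma range_hboundary0 :
    LinearMap.range (hboundary k A A 0) =
      Submodule.span k {x : A | ∃ a b : A, x = a * b - b * a} := by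
  apply le_antisymm
  · rintro _ ⟨v, rfl⟩
    induction v using TensorProduct.induction_on with
    | zero => erw [map_zero]; exact Submodule.zero_mem _
    | tmul x a =>
        erw [hboundary0_apply]
        exact Submodule.subset_span (s := {x : A | ∃ a b : A, x = a * b - b * a}) ⟨x, a, rfl⟩
    | add v w hv hw => erw [map_add]; exact Submodule.add_mem _ hv hw
  · erw [Submodule.span_le]
    rintro _ ⟨a, b, rfl⟩
    exact ⟨a ⊗ₜ[k] b, hboundary0_apply k A a b⟩

end Aux

/-- quotient of top submodule -/
noncomputable def quotTop {R : Type u} [CommRing R] {N : Type u} [AddCommGroup N] [Module R N]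
    (p : Submodule R N) (hp : p = ⊤) (S : Submodule R N) :
    (p ⧸ Submodule.comap p.subtype S) ≃ₗ[R] N ⧸ S :=
  Submodule.Quotient.equiv _ _ (LinearEquiv.ofTop p hp) (by
    subst hp
    ext x
    simp only [Submodule.mem_map, Submodule.mem_comap, Submodule.subtype_apply]
    constructor
    · rintro ⟨y, hy, rfl⟩; exact hy
    · intro hx; exact ⟨⟨x, trivial⟩, hx, rfl⟩)

section Test
variable (k : Type u) [CommRing k] (A : Type u) [Ring A] [Algebra k A]

noncomputable def hochEquiv : HochH k A A 0 ≃ₗ[k]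
    (A ⧸ Submodule.span k {x : A | ∃ a b : A, x = a * b - b * a}) :=
  (quotTop (hcycles k A A 0) rfl (LinearMap.range (hboundary k A A 0))).trans
    (Submodule.quotEquivOfEq _ _ (range_hboundary0 k A))
end Test
set_option linter.unusedSectionVars false
section Cast
variable (k : Type u) [CommRing k] (A : Type u) [Ring A] [Algebra k A]
variable (M : Type u) [AddCommGroup M] [Module k M]
  [Module A M] [Module Aᵐᵒᵖ M] [SMulCommClass A Aᵐᵒᵖ M]
  [IsScalarTower k A M] [IsScalarTower k Aᵐᵒᵖ M]

/-- Transport along an equality of indices. -/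
noncomputable def hcE : {r r' : ℕ} → r = r' → (HC k A M r ≃ₗ[k] HC k A M r')
  | _, _, rfl => LinearEquiv.refl k _

lemma hcE_heq {r r' : ℕ} (h : r = r') (x : HC k A M r) : HEq (hcE k A M h x) x := by
  subst h; rfl

lemma heq_apply {r1 r2 r1' r2' : ℕ} (h1 : r1 = r1') (h2 : r2 = r2')
    {f : HC k A M r1 →ₗ[k] HC k A M r2} {g : HC k A M r1' →ₗ[k] HC k A M r2'}
    (hfg : HEq f g) {x : HC k A M r1} {y : HC k A M r1'} (hxy : HEq x y) :
    HEq (f x) (g y) := by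
  subst h1; subst h2; cases hfg; cases hxy; rfl

lemma hface_heq {r r' : ℕ} (h : r = r') (i : Fin (r+2)) (i' : Fin (r'+2))
    (hi : (i : ℕ) = (i' : ℕ)) :
    HEq (hface k A M r i) (hface k A M r' i') := by
  subst h
  have : i = i' := Fin.ext hi
  subst this
  rfl

lemma pMerge_heq (m j i : ℕ) (h1 : j + 2 ≤ m) (h2 : i < m - j) :
    HEq (pMerge k A M m j i) (hface k A M (m-2-j) ⟨i, by omega⟩) := by
  unfold pMerge
  rw [dif_pos ⟨h1, h2⟩]
  simp only [eq_mpr_eq_cast]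
  exact (cast_heq _ _).trans (cast_heq _ _)

end Cast
set_option linter.unusedSectionVars false

section Main
variable (k : Type u) [CommRing k] (A : Type u) [Ring A] [Algebra k A] (p : ℕ)

/-- the edge subset missing exactly the edge `g` -/
def eS (g : Fin (p+3)) : EdgeSub (p+3) (p+2) :=
  ⟨{g}ᶜ, by simp [Finset.card_compl]⟩

/-- the edge subset missing exactly the edges `e`, `f` -/
def sC (e f : Fin (p+3)) (h : e ≠ f) : EdgeSub (p+3) (p+1) :=
  ⟨({e,f} : Finset (Fin (p+3)))ᶜ, by
    rw [Finset.card_compl, Finset.card_insert_of_notMem (by simp [h]),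
      Finset.card_singleton, Fintype.card_fin]
    omega⟩

lemma h1eq : (p+3)-1-(p+1) = 1 := by omega
lemma h0eq : (p+3)-1-(p+2) = 0 := by omega

lemma pMerge_apply01 (i : ℕ) (hi : i < 2) (v : A ⊗[k] A) :
    pMerge k A A (p+3) (p+1) i (hcE k A A (h1eq p).symm v) =
      hcE k A A (h0eq p).symm (hface k A A 0 ⟨i, by omega⟩ v) := by
  have hm : HEq (pMerge k A A (p+3) (p+1) i) (hface k A A 0 ⟨i, by omega⟩) :=
    (pMerge_heq k A A (p+3) (p+1) i (by omega) (by omega)).trans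
      (hface_heq k A A (show (p+3)-2-(p+1) = 0 by omega) _ _ rfl)
  have happ : HEq (pMerge k A A (p+3) (p+1) i (hcE k A A (h1eq p).symm v))
      (hface k A A 0 ⟨i, by omega⟩ v) :=
    heq_apply k A A (h1eq p) (h0eq p) hm (hcE_heq k A A (h1eq p).symm v)
  exact eq_of_heq (happ.trans (hcE_heq k A A (h0eq p).symm _).symm)

end Main
section Main2
variable (k : Type u) [CommRing k] (A : Type u) [Ring A] [Algebra k A]

/-- the summand of `pD` corresponding to adding edge `g`. -/
noncomputable def Fterm (m j : ℕ) (s : EdgeSub m j) (v : HC k A A (m-1-j)) (g : Fin m) :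
    PChain k A A m (j+1) :=
  if hg : g ∈ (s.val)ᶜ then
    ((-1:ℤ) ^ ((s.val.filter (fun a => a < g)).card)) •
      DirectSum.lof k (EdgeSub m (j+1)) (fun _ => HC k A A (m-1-(j+1)))
        ⟨insert g s.val, by
          rw [Finset.card_insert_of_notMem (Finset.mem_compl.mp hg), s.property]⟩
        (pMerge k A A m j (((s.val)ᶜ.filter (fun a => a < g)).card) v)
  else 0

lemma pD_lof (m j : ℕ) (s : EdgeSub m j) (v : HC k A A (m-1-j)) :
    pD k A A m j (DirectSum.lof k (EdgeSub m j) (fun _ => HC k A A (m-1-j)) s v) =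
      ∑ g ∈ (s.val)ᶜ, Fterm k A m j s v g := by
  rw [← Finset.sum_attach ((s.val)ᶜ) (Fterm k A m j s v)]
  rw [pD]
  erw [DirectSum.toModule_lof]
  erw [LinearMap.sum_apply]
  apply Finset.sum_congr rfl
  intro e he
  erw [LinearMap.smul_apply, LinearMap.comp_apply, Fterm, dif_pos e.property]

end Main2
section Comb
variable {m : ℕ}

lemma filt_c1 (e f : Fin m) (hef : e < f) :
    (({e,f} : Finset (Fin m)).filter (fun a => a < e)).card = 0 := by
  rw [Finset.card_eq_zero, Finset.filter_eq_empty_iff]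
  intro x hx
  rcases Finset.mem_insert.mp hx with rfl | hx
  · exact lt_irrefl _
  · rw [Finset.mem_singleton] at hx; subst hx; exact not_lt.mpr hef.le

lemma filt_c2 (e f : Fin m) (hef : e < f) :
    (({e,f} : Finset (Fin m)).filter (fun a => a < f)).card = 1 := by
  have : (({e,f} : Finset (Fin m)).filter (fun a => a < f)) = {e} := by
    ext x
    simp only [Finset.mem_filter, Finset.mem_insert, Finset.mem_singleton]
    constructor
    · rintro ⟨rfl | rfl, h2⟩
      · rfl
      · exact absurd h2 (lt_irrefl _)
    · rintro rfl; exact ⟨Or.inl rfl, hef⟩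
  rw [this, Finset.card_singleton]

lemma filt_1 (e f : Fin m) (hef : e < f) :
    ((({e,f} : Finset (Fin m))ᶜ).filter (fun a => a < e)).card = (e : ℕ) := by
  have : ((({e,f} : Finset (Fin m))ᶜ).filter (fun a => a < e)) = Finset.Iio e := by
    ext x
    simp only [Finset.mem_filter, Finset.mem_compl, Finset.mem_insert,
      Finset.mem_singleton, Finset.mem_Iio]
    constructor
    · rintro ⟨_, h2⟩; exact h2
    · intro hx
      refine ⟨?_, hx⟩
      rintro (rfl | rfl)
      · exact absurd hx (lt_irrefl _)
      · exact absurd (hx.trans hef) (lt_irrefl _)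
  rw [this, Fin.card_Iio]

lemma filt_2 (e f : Fin m) (hef : e < f) :
    ((({e,f} : Finset (Fin m))ᶜ).filter (fun a => a < f)).card = (f : ℕ) - 1 := by
  have : ((({e,f} : Finset (Fin m))ᶜ).filter (fun a => a < f)) = (Finset.Iio f).erase e := by
    ext x
    simp only [Finset.mem_filter, Finset.mem_compl, Finset.mem_insert,
      Finset.mem_singleton, Finset.mem_Iio, Finset.mem_erase]
    constructor
    · rintro ⟨h1, h2⟩
      exact ⟨fun hx => h1 (Or.inl hx), h2⟩
    · rintro ⟨h1, h2⟩
      refine ⟨?_, h2⟩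
      rintro (rfl | rfl)
      · exact h1 rfl
      · exact absurd h2 (lt_irrefl _)
  rw [this, Finset.card_erase_of_mem (Finset.mem_Iio.mpr hef), Fin.card_Iio]

lemma ins_1 (e f : Fin m) (hef : e ≠ f) :
    insert e (({e,f} : Finset (Fin m))ᶜ) = ({f} : Finset (Fin m))ᶜ := by
  ext x
  simp only [Finset.mem_insert, Finset.mem_compl, Finset.mem_singleton]
  constructor
  · rintro (rfl | h)
    · exact hef
    · intro hx; exact h (Or.inr hx)
  · intro hx
    by_cases hxe : x = e
    · exact Or.inl hxe
    · exact Or.inr (by rintro (rfl | rfl); exact hxe rfl; exact hx rfl)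

lemma ins_2 (e f : Fin m) (hef : e ≠ f) :
    insert f (({e,f} : Finset (Fin m))ᶜ) = ({e} : Finset (Fin m))ᶜ := by
  have : ({e,f} : Finset (Fin m)) = {f,e} := by
    ext x; simp [Finset.mem_insert, Finset.mem_singleton, or_comm]
  rw [this]
  exact ins_1 f e (Ne.symm hef)

end Comb
section Main3
variable (k : Type u) [CommRing k] (A : Type u) [Ring A] [Algebra k A] (p : ℕ)

lemma hface00 (x a : A) : hface k A A 0 ⟨0, by omega⟩ (x ⊗ₜ[k] a) = x * a := rfl
lemma hface01 (x a : A) : hface k A A 0 ⟨1, by omega⟩ (x ⊗ₜ[k] a) = a * x := rfl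

lemma R1 (e f : Fin (p+3)) (hef : e < f) (x a : A) :
    pD k A A (p+3) (p+1)
      (DirectSum.lof k (EdgeSub (p+3) (p+1)) (fun _ => HC k A A ((p+3)-1-(p+1)))
        (sC p e f hef.ne) (hcE k A A (h1eq p).symm (x ⊗ₜ[k] a))) =
    ((-1:ℤ)^(e:ℕ)) • DirectSum.lof k (EdgeSub (p+3) (p+2))
        (fun _ => HC k A A ((p+3)-1-((p+1)+1))) (eS p f) (hcE k A A (h0eq p).symm (x*a))
    + ((-1:ℤ)^((f:ℕ)-1)) • DirectSum.lof k (EdgeSub (p+3) (p+2))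
        (fun _ => HC k A A ((p+3)-1-((p+1)+1))) (eS p e) (hcE k A A (h0eq p).symm (a*x)) := by
  rw [pD_lof]
  have hc : (((sC p e f hef.ne).val)ᶜ) = ({e,f} : Finset (Fin (p+3))) := compl_compl _
  rw [hc, Finset.sum_pair hef.ne]
  have he : e ∈ (((sC p e f hef.ne).val)ᶜ) := by rw [hc]; exact Finset.mem_insert_self _ _
  have hf : f ∈ (((sC p e f hef.ne).val)ᶜ) := by
    rw [hc]; exact Finset.mem_insert_of_mem (Finset.mem_singleton_self _)
  erw [Fterm, dif_pos he, Fterm, dif_pos hf]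
  have hsv : (sC p e f hef.ne).val = ({e,f} : Finset (Fin (p+3)))ᶜ := rfl
  have hidx1 : (⟨insert e (sC p e f hef.ne).val, by
      rw [Finset.card_insert_of_notMem (Finset.mem_compl.mp he), (sC p e f hef.ne).property]⟩ :
      EdgeSub (p+3) ((p+1)+1)) = eS p f := Subtype.ext (ins_1 e f hef.ne)
  have hidx2 : (⟨insert f (sC p e f hef.ne).val, by
      rw [Finset.card_insert_of_notMem (Finset.mem_compl.mp hf), (sC p e f hef.ne).property]⟩ :
      EdgeSub (p+3) ((p+1)+1)) = eS p e := Subtype.ext (ins_2 e f hef.ne)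
  rw [hidx1, hidx2]
  rw [show ((((sC p e f hef.ne).val)ᶜ).filter (fun a => a < e)).card = 0 by
        rw [hc]; exact filt_c1 e f hef]
  rw [show ((((sC p e f hef.ne).val)ᶜ).filter (fun a => a < f)).card = 1 by
        rw [hc]; exact filt_c2 e f hef]
  rw [show (((sC p e f hef.ne).val).filter (fun a => a < e)).card = (e:ℕ) by
        rw [hsv]; exact filt_1 e f hef]
  rw [show (((sC p e f hef.ne).val).filter (fun a => a < f)).card = (f:ℕ) - 1 by
        rw [hsv]; exact filt_2 e f hef]
  erw [pMerge_apply01 k A p 0 (by omega), pMerge_apply01 k A p 1 (by omega)]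
  erw [hface00, hface01]
  rfl

end Main3
section Main4
variable (k : Type u) [CommRing k] (A : Type u) [Ring A] [Algebra k A] (p : ℕ)

/-- the commutator submodule -/
noncomputable def Cspan : Submodule k A :=
  Submodule.span k {x : A | ∃ a b : A, x = a * b - b * a}

lemma hcE_cancel {r r' : ℕ} (h : r = r') (a : HC k A A r') :
    hcE k A A h (hcE k A A h.symm a) = a := by subst h; rfl

lemma hcE_cancel' {r r' : ℕ} (h : r = r') (a : HC k A A r) :
    hcE k A A h.symm (hcE k A A h a) = a := by subst h; rfl

/-- the comparison map to `A/[A,A]` -/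
noncomputable def φP : PChain k A A (p+3) (p+2) →ₗ[k] (A ⧸ Cspan k A) :=
  DirectSum.toModule k (EdgeSub (p+3) (p+2)) (A ⧸ Cspan k A) (fun s =>
    ((-1:ℤ)^(∑ x ∈ (s.val)ᶜ, (x:ℕ))) •
      (((Cspan k A).mkQ : HC k A A 0 →ₗ[k] (A ⧸ Cspan k A)) ∘ₗ
        ((hcE k A A (h0eq p)).toLinearMap)))

lemma φP_lof (s : EdgeSub (p+3) (p+2)) (w : HC k A A ((p+3)-1-(p+2))) :
    φP k A p (DirectSum.lof k (EdgeSub (p+3) (p+2))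
        (fun _ => HC k A A ((p+3)-1-(p+2))) s w) =
      ((-1:ℤ)^(∑ x ∈ (s.val)ᶜ, (x:ℕ))) • (Cspan k A).mkQ (hcE k A A (h0eq p) w) := by
  rw [φP]
  erw [DirectSum.toModule_lof]
  rfl

lemma sigma_eS (g : Fin (p+3)) : ∑ x ∈ (((eS p g).val)ᶜ), (x:ℕ) = (g:ℕ) := by
  have : (((eS p g).val)ᶜ) = ({g} : Finset (Fin (p+3))) := compl_compl _
  rw [this, Finset.sum_singleton]

lemma mkQ_comm (x a : A) : (Cspan k A).mkQ (x * a) = (Cspan k A).mkQ (a * x) := by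
  rw [← sub_eq_zero, ← map_sub, Submodule.mkQ_apply, Submodule.Quotient.mk_eq_zero]
  exact Submodule.subset_span ⟨x, a, rfl⟩

lemma φP_pD_lof (e f : Fin (p+3)) (hef : e < f) (x a : A) :
    φP k A p (pD k A A (p+3) (p+1)
      (DirectSum.lof k (EdgeSub (p+3) (p+1)) (fun _ => HC k A A ((p+3)-1-(p+1)))
        (sC p e f hef.ne) (hcE k A A (h1eq p).symm (x ⊗ₜ[k] a)))) = 0 := by
  erw [R1 k A p e f hef x a, map_add, map_zsmul, map_zsmul]
  erw [φP_lof, φP_lof]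
  erw [sigma_eS, sigma_eS, hcE_cancel, hcE_cancel]
  erw [mkQ_comm k A x a]
  rw [smul_smul, smul_smul, ← pow_add, ← pow_add]
  have h1 : ((-1:ℤ))^((e:ℕ) + (f:ℕ)) + ((-1:ℤ))^((f:ℕ) - 1 + (e:ℕ)) = 0 := by
    obtain ⟨q, hq⟩ : ∃ q, (f:ℕ) = q + 1 := by
      refine ⟨(f:ℕ) - 1, ?_⟩
      have := hef
      rw [Fin.lt_def] at this
      omega
    rw [hq, Nat.add_sub_cancel, pow_add, pow_add, pow_succ]
    ring
  rw [← add_smul, h1, zero_smul]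

end Main4
section Main5
variable (k : Type u) [CommRing k] (A : Type u) [Ring A] [Algebra k A] (p : ℕ)

lemma range_le_ker :
    LinearMap.range (pD k A A (p+3) (p+1)) ≤ LinearMap.ker (φP k A p) := by
  rintro _ ⟨z, rfl⟩
  rw [LinearMap.mem_ker]
  induction z using DirectSum.induction_on with
  | zero => erw [map_zero]
  | add x y hx hy => erw [map_add, map_add, hx, hy, add_zero]
  | of s w =>
    rw [← DirectSum.lof_eq_of k]
    have key : ∀ v : A ⊗[k] A,
        φP k A p (pD k A A (p+3) (p+1) (DirectSum.lof k (EdgeSub (p+3) (p+1))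
          (fun _ => HC k A A ((p+3)-1-(p+1))) s (hcE k A A (h1eq p).symm v))) = 0 := by
      intro v
      induction v using TensorProduct.induction_on with
      | zero => erw [map_zero, map_zero, map_zero]
      | add v₁ v₂ h₁ h₂ => erw [map_add (hcE k A A (h1eq p).symm), map_add (DirectSum.lof k (EdgeSub (p+3) (p+1)) (fun _ => HC k A A ((p+3)-1-(p+1))) s), map_add (pD k A A (p+3) (p+1)), map_add (φP k A p), h₁, h₂, add_zero]
      | tmul x a =>
        have hs2 : ((s.val)ᶜ).card = 2 := by
          rw [Finset.card_compl, s.property, Fintype.card_fin]; omega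
        obtain ⟨e, f, hne, hc⟩ := Finset.card_eq_two.mp hs2
        rcases hne.lt_or_gt with hef | hef
        · have hs : s = sC p e f hne := by
            apply Subtype.ext
            rw [show (sC p e f hne).val = ({e,f} : Finset (Fin (p+3)))ᶜ from rfl, ← hc,
              compl_compl]
          rw [hs]
          exact φP_pD_lof k A p e f hef x a
        · have hs : s = sC p f e hne.symm := by
            apply Subtype.ext
            rw [show (sC p f e hne.symm).val = ({f,e} : Finset (Fin (p+3)))ᶜ from rfl,
              show ({f,e} : Finset (Fin (p+3))) = {e,f} from Finset.pair_comm f e, ← hc,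
              compl_compl]
          rw [hs]
          exact φP_pD_lof k A p f e hef x a
    have := key (hcE k A A (h1eq p) w)
    rwa [hcE_cancel'] at this

lemma neg_one_pow_cancel (i : ℕ) {N : Type u} [AddCommGroup N] (z : N) :
    ((-1:ℤ)^i) • ((-1:ℤ)^i) • z = z := by
  rw [smul_smul, ← pow_add, ← two_mul, pow_mul]
  norm_num

lemma Dlem (g : Fin (p+3)) (a : A) :
    DirectSum.lof k (EdgeSub (p+3) (p+2)) (fun _ => HC k A A ((p+3)-1-(p+2)))
        (eS p g) (hcE k A A (h0eq p).symm a)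
      - ((-1:ℤ)^(g:ℕ)) • DirectSum.lof k (EdgeSub (p+3) (p+2))
        (fun _ => HC k A A ((p+3)-1-(p+2))) (eS p 0) (hcE k A A (h0eq p).symm a)
      ∈ LinearMap.range (pD k A A (p+3) (p+1)) := by
  induction g using Fin.induction with
  | zero => rw [Fin.val_zero, pow_zero, one_smul, sub_self]; exact Submodule.zero_mem _
  | succ i ih =>
    have hef : (i.castSucc : Fin (p+3)) < i.succ := Fin.castSucc_lt_succ (i := i)
    have E := R1 k A p i.castSucc i.succ hef a 1
    rw [mul_one, one_mul, Fin.coe_castSucc, Fin.val_succ, Nat.add_sub_cancel] at E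
    set L := DirectSum.lof k (EdgeSub (p+3) (p+2))
      (fun _ => HC k A A ((p+3)-1-(p+2))) with hL
    set ah := hcE k A A (h0eq p).symm a with hah
    have hX : ((-1:ℤ)^(i:ℕ)) • (L (eS p i.succ) ah + L (eS p i.castSucc) ah)
        ∈ LinearMap.range (pD k A A (p+3) (p+1)) := by
      refine ⟨DirectSum.lof k (EdgeSub (p+3) (p+1))
        (fun _ => HC k A A ((p+3)-1-(p+1))) (sC p i.castSucc i.succ hef.ne)
        (hcE k A A (h1eq p).symm (a ⊗ₜ[k] 1)), ?_⟩
      rw [E, smul_add]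
    have key : L (eS p i.succ) ah - ((-1:ℤ)^((i:ℕ)+1)) • L (eS p 0) ah
        = ((-1:ℤ)^(i:ℕ)) • (((-1:ℤ)^(i:ℕ)) • (L (eS p i.succ) ah + L (eS p i.castSucc) ah))
          - (L (eS p i.castSucc) ah - ((-1:ℤ)^(i:ℕ)) • L (eS p 0) ah) := by
      rw [neg_one_pow_cancel, pow_succ]
      rw [show ((-1:ℤ)^(i:ℕ) * -1) • L (eS p 0) ah = -(((-1:ℤ)^(i:ℕ)) • L (eS p 0) ah) by
        rw [← neg_smul]; ring_nf]
      abel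
    rw [Fin.val_succ, key]
    exact Submodule.sub_mem _ (zsmul_mem hX _) ih

end Main5
section Main6
variable (k : Type u) [CommRing k] (A : Type u) [Ring A] [Algebra k A] (p : ℕ)

/-- `a ↦ [lof (eS 0) a]` -/
noncomputable def ψ0 : A →ₗ[k]
    (PChain k A A (p+3) (p+2) ⧸ LinearMap.range (pD k A A (p+3) (p+1))) :=
  (LinearMap.range (pD k A A (p+3) (p+1))).mkQ ∘ₗ
    (DirectSum.lof k (EdgeSub (p+3) (p+2)) (fun _ => HC k A A ((p+3)-1-(p+2))) (eS p 0)) ∘ₗ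
    (((hcE k A A (h0eq p).symm).toLinearMap : HC k A A 0 →ₗ[k] _) : A →ₗ[k] _)

lemma comm_mem_range (x a : A) :
    DirectSum.lof k (EdgeSub (p+3) (p+2)) (fun _ => HC k A A ((p+3)-1-(p+2))) (eS p 0)
      (hcE k A A (h0eq p).symm (x * a - a * x))
      ∈ LinearMap.range (pD k A A (p+3) (p+1)) := by
  have h01 : (0 : Fin (p+3)) < 1 := by
    rw [Fin.lt_def, Fin.val_zero, Fin.val_one]; omega
  have E1 := R1 k A p 0 1 h01 x a
  have E2 := R1 k A p 0 1 h01 1 (x*a)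
  rw [one_mul, mul_one] at E2
  simp only [Fin.val_zero, Fin.val_one, Nat.sub_self, pow_zero, one_smul] at E1 E2
  have : DirectSum.lof k (EdgeSub (p+3) (p+2)) (fun _ => HC k A A ((p+3)-1-(p+2))) (eS p 0)
      (hcE k A A (h0eq p).symm (x * a - a * x))
      = (pD k A A (p+3) (p+1)
          (DirectSum.lof k (EdgeSub (p+3) (p+1)) (fun _ => HC k A A ((p+3)-1-(p+1)))
            (sC p 0 1 h01.ne) (hcE k A A (h1eq p).symm ((1:A) ⊗ₜ[k] (x*a)))))
        - (pD k A A (p+3) (p+1)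
          (DirectSum.lof k (EdgeSub (p+3) (p+1)) (fun _ => HC k A A ((p+3)-1-(p+1)))
            (sC p 0 1 h01.ne) (hcE k A A (h1eq p).symm (x ⊗ₜ[k] a)))) := by
    erw [E1, E2, map_sub, map_sub]
    abel
  rw [this]
  exact Submodule.sub_mem _ (LinearMap.mem_range_self (pD k A A (p+3) (p+1)) _) (LinearMap.mem_range_self (pD k A A (p+3) (p+1)) _)

/-- descends to the quotient -/
noncomputable def ψQ : (A ⧸ Cspan k A) →ₗ[k]
    (PChain k A A (p+3) (p+2) ⧸ LinearMap.range (pD k A A (p+3) (p+1))) :=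
  Submodule.liftQ (Cspan k A) (ψ0 k A p) (by
    rw [Cspan, Submodule.span_le]
    rintro _ ⟨x, a, rfl⟩
    rw [SetLike.mem_coe, LinearMap.mem_ker]
    show (LinearMap.range (pD k A A (p+3) (p+1))).mkQ
      (DirectSum.lof k (EdgeSub (p+3) (p+2)) (fun _ => HC k A A ((p+3)-1-(p+2))) (eS p 0)
        (hcE k A A (h0eq p).symm (x * a - a * x))) = 0
    erw [Submodule.mkQ_apply, Submodule.Quotient.mk_eq_zero]
    exact comm_mem_range k A p x a)

noncomputable def φQ :
    (PChain k A A (p+3) (p+2) ⧸ LinearMap.range (pD k A A (p+3) (p+1))) →ₗ[k]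
      (A ⧸ Cspan k A) :=
  Submodule.liftQ _ (φP k A p) (range_le_ker k A p)

lemma φQ_ψQ : (φQ k A p) ∘ₗ (ψQ k A p) = LinearMap.id := by
  apply Submodule.linearMap_qext
  apply LinearMap.ext
  intro a
  simp only [LinearMap.comp_apply, Submodule.mkQ_apply, LinearMap.id_apply]
  rw [ψQ, Submodule.liftQ_apply, ψ0]
  simp only [LinearMap.comp_apply, LinearEquiv.coe_coe]
  rw [Submodule.mkQ_apply, φQ, Submodule.liftQ_apply]
  erw [φP_lof]
  rw [sigma_eS, Fin.val_zero, pow_zero, one_smul]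
  exact (congrArg (Cspan k A).mkQ (hcE_cancel k A (h0eq p) a)).trans rfl

lemma perS (g : Fin (p+3)) (w : HC k A A ((p+3)-1-(p+2))) :
    ψQ k A p (φP k A p (DirectSum.lof k (EdgeSub (p+3) (p+2))
        (fun _ => HC k A A ((p+3)-1-(p+2))) (eS p g) w)) =
      (LinearMap.range (pD k A A (p+3) (p+1))).mkQ
        (DirectSum.lof k (EdgeSub (p+3) (p+2))
          (fun _ => HC k A A ((p+3)-1-(p+2))) (eS p g) w) := by
  have hw := hcE_cancel' k A (h0eq p) w
  rw [← hw]
  generalize (hcE k A A (h0eq p)) w = a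
  rw [φP_lof, sigma_eS, map_zsmul, ψQ]
  show ((-1:ℤ)^(g:ℕ)) • ψ0 k A p (hcE k A A (h0eq p) (hcE k A A (h0eq p).symm a)) = _
  unfold ψ0
  erw [hcE_cancel k A (h0eq p)]
  show ((-1:ℤ)^(g:ℕ)) • (LinearMap.range (pD k A A (p+3) (p+1))).mkQ
    (DirectSum.lof k (EdgeSub (p+3) (p+2)) (fun _ => HC k A A ((p+3)-1-(p+2))) (eS p 0)
      ((hcE k A A (h0eq p).symm) a)) = _
  have hmk : (LinearMap.range (pD k A A (p+3) (p+1))).mkQ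
        (DirectSum.lof k (EdgeSub (p+3) (p+2)) (fun _ => HC k A A ((p+3)-1-(p+2))) (eS p g)
          ((hcE k A A (h0eq p).symm) a))
      = ((-1:ℤ)^(g:ℕ)) • (LinearMap.range (pD k A A (p+3) (p+1))).mkQ
        (DirectSum.lof k (EdgeSub (p+3) (p+2)) (fun _ => HC k A A ((p+3)-1-(p+2))) (eS p 0)
          ((hcE k A A (h0eq p).symm) a)) := by
    erw [← map_zsmul, ← sub_eq_zero, ← map_sub, Submodule.mkQ_apply,
      Submodule.Quotient.mk_eq_zero]
    exact Dlem k A p g a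
  rw [hmk]

set_option maxHeartbeats 2000000 in
lemma ψQ_φQ : (ψQ k A p) ∘ₗ (φQ k A p) = LinearMap.id := by
  apply Submodule.linearMap_qext
  rw [show ((ψQ k A p) ∘ₗ (φQ k A p)) ∘ₗ (LinearMap.range (pD k A A (p+3) (p+1))).mkQ
      = (ψQ k A p) ∘ₗ ((φQ k A p) ∘ₗ (LinearMap.range (pD k A A (p+3) (p+1))).mkQ)
    from rfl]
  rw [φQ, Submodule.liftQ_mkQ]
  refine DirectSum.linearMap_ext k (fun s => ?_)
  apply LinearMap.ext
  intro w
  obtain ⟨g, hg⟩ := Finset.card_eq_one.mp (show ((s.val)ᶜ).card = 1 by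
    rw [Finset.card_compl, s.property, Fintype.card_fin]; omega)
  have hs : s = eS p g := by
    apply Subtype.ext
    rw [show (eS p g).val = ({g} : Finset (Fin (p+3)))ᶜ from rfl, ← hg, compl_compl]
  subst hs
  exact perS k A p g w

noncomputable def quotEquiv :
    (PChain k A A (p+3) (p+2) ⧸ LinearMap.range (pD k A A (p+3) (p+1))) ≃ₗ[k]
      (A ⧸ Cspan k A) :=
  LinearEquiv.ofLinear (φQ k A p) (ψQ k A p) (φQ_ψQ k A p) (ψQ_φQ k A p)

lemma pMerge_top_zero (i : ℕ) : pMerge k A A (p+3) (p+2) i = 0 := by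
  rw [pMerge, dif_neg]
  rintro ⟨h, _⟩
  omega

lemma pDtop_zero : pD k A A (p+3) (p+2) = 0 := by
  refine DirectSum.linearMap_ext k (fun s => ?_)
  apply LinearMap.ext
  intro v
  erw [pD_lof]
  refine Finset.sum_eq_zero (fun g hg => ?_)
  erw [Fterm, dif_pos (by exact hg), pMerge_top_zero, LinearMap.zero_apply, map_zero,
    smul_zero]
  rfl

lemma ker_top : LinearMap.ker (pD k A A (p+3) (p+2)) = ⊤ := by
  rw [pDtop_zero]; exact LinearMap.ker_zero

/-- the final equivalence -/
noncomputable def finalEquiv : PolyCoh k A A (p+3) (p+2) ≃ₗ[k] (A ⧸ Cspan k A) :=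
  (quotTop (LinearMap.ker (pD k A A (p+3) (p+2))) (ker_top k A p)
      (pBnd k A A (p+3) (p+2))).trans (quotEquiv k A p)

end Main6

/-- Let `k` be a commutative ring, `A` a unital `k`-algebra which is free
as a `k`-module, and `n ≥ 2`.  Then the top graph cohomology of the directed `(n+1)`-gon
satisfies `Ĥ^n_A(P_{n+1}) ≅ A / C`, where `C` is the `k`-submodule of `A` generated by all
commutators `a*b - b*a`; equivalently `Ĥ^n_A(P_{n+1}) ≅ HH_0(A)`. -/
theorem polygon_top_cohomology
    (k : Type u) [CommRing k] (A : Type u) [Ring A] [Algebra k A] [Module.Free k A]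
    (n : ℕ) (hn : 2 ≤ n) :
    Nonempty (PolyCoh k A A (n+1) n ≃ₗ[k]
      (A ⧸ Submodule.span k {x : A | ∃ a b : A, x = a * b - b * a})) ∧
    Nonempty (PolyCoh k A A (n+1) n ≃ₗ[k] HochH k A A 0) := by
  obtain ⟨p, rfl⟩ : ∃ p, n = p + 2 := ⟨n - 2, by omega⟩
  have e : PolyCoh k A A (p+2+1) (p+2) ≃ₗ[k]
      (A ⧸ Submodule.span k {x : A | ∃ a b : A, x = a * b - b * a}) := finalEquiv k A p
  exact ⟨⟨e⟩, ⟨e.trans (hochEquiv k A).symm⟩⟩
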